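/- arXiv:2510.25525 — 3 statements merged into one kernel-verified Lean document; each statement's English description precedes it below -/
import Mathlib

section
/- For every Schwartz function φ ∈ S(ℝⁿ), the random variable ω ↦ ⟨ω,φ⟩ on (Ω,P) has expectation zero: ∫_Ω ⟨ω,φ⟩ P(dω) = 0. -/
open MeasureTheory Complex

lemma hasDerivAt_exp_I_mul (c : ℂ) (t : ℝ) :
    HasDerivAt (fun s : ℝ => Complex.exp (Complex.I * s * c))
      (Complex.exp (Complex.I * t * c) * (Complex.I * c)) t := by
  have h0 : HasDerivAt (fun s : ℝ => (s : ℂ)) 1 t := by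
    exact Complex.ofRealCLM.hasDerivAt (x := t)
  have h1 : HasDerivAt (fun s : ℝ => Complex.I * (s : ℂ) * c) (Complex.I * 1 * c) t :=
    (h0.const_mul Complex.I).mul_const c
  simpa [mul_one] using h1.cexp

lemma aux_nonneg1 (x : ℝ) (hx : 0 ≤ x) : ‖Complex.exp (Complex.I * x) - 1‖ ≤ x := by
  have key := norm_image_sub_le_of_norm_deriv_le_segment'
    (f := fun s : ℝ => Complex.exp (Complex.I * s * 1))
    (f' := fun s : ℝ => Complex.exp (Complex.I * s * 1) * (Complex.I * 1))
    (a := 0) (b := x) (C := 1)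
    (fun s _ => (hasDerivAt_exp_I_mul 1 s).hasDerivWithinAt)
    (fun s _ => by
      simp [map_mul, Complex.norm_exp]) x ⟨hx, le_refl x⟩
  simpa using key

lemma norm1 (x : ℝ) : ‖Complex.exp (Complex.I * x) - 1‖ ≤ |x| := by
  rcases le_or_gt 0 x with hx | hx
  · rw [_root_.abs_of_nonneg hx]; exact aux_nonneg1 x hx
  · have h := aux_nonneg1 (-x) (by linarith)
    have hc : Complex.exp (Complex.I * x) - 1
        = (starRingEnd ℂ) (Complex.exp (Complex.I * (-x : ℝ)) - 1) := by
      rw [map_sub, ← Complex.exp_conj]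
      simp [Complex.conj_I]
    rw [hc, RCLike.norm_conj]
    simpa [abs_of_neg hx] using h

lemma aux_nonneg2 (x : ℝ) (hx : 0 ≤ x) :
    ‖Complex.exp (Complex.I * x) - 1 - Complex.I * x‖ ≤ x ^ 2 := by
  have hder : ∀ t : ℝ, HasDerivAt
      (fun s : ℝ => Complex.exp (Complex.I * s) - 1 - Complex.I * s)
      (Complex.exp (Complex.I * t) * Complex.I - Complex.I) t := by
    intro t
    have h0 : HasDerivAt (fun s : ℝ => (s : ℂ)) 1 t := by
      exact Complex.ofRealCLM.hasDerivAt (x := t)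
    have h1 : HasDerivAt (fun s : ℝ => Complex.I * (s : ℂ)) (Complex.I * 1) t :=
      h0.const_mul Complex.I
    have h2 : HasDerivAt (fun s : ℝ => Complex.exp (Complex.I * s))
        (Complex.exp (Complex.I * t) * Complex.I) t := by
      simpa [mul_one] using (hasDerivAt_exp_I_mul 1 t)
    exact ((h2.sub_const 1).sub h1).congr_deriv (by ring)
  have key := norm_image_sub_le_of_norm_deriv_le_segment'
    (f := fun s : ℝ => Complex.exp (Complex.I * s) - 1 - Complex.I * s)
    (f' := fun s : ℝ => Complex.exp (Complex.I * s) * Complex.I - Complex.I)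
    (a := 0) (b := x) (C := x)
    (fun s _ => (hder s).hasDerivWithinAt)
    (fun s hs => by
      show ‖Complex.exp (Complex.I * s) * Complex.I - Complex.I‖ ≤ x
      have heq : Complex.exp (Complex.I * s) * Complex.I - Complex.I
          = (Complex.exp (Complex.I * s) - 1) * Complex.I := by ring
      rw [heq, norm_mul, Complex.norm_I, mul_one]
      exact (norm1 s).trans (by rw [_root_.abs_of_nonneg hs.1]; exact hs.2.le))
    x ⟨hx, le_refl x⟩
  have : ((0:ℝ):ℂ) = 0 := by norm_num
  simpa [this, sq] using key

lemma norm2 (x : ℝ) : ‖Complex.exp (Complex.I * x) - 1 - Complex.I * x‖ ≤ x ^ 2 := by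
  rcases le_or_gt 0 x with hx | hx
  · exact aux_nonneg2 x hx
  · have h := aux_nonneg2 (-x) (by linarith)
    have hc : Complex.exp (Complex.I * x) - 1 - Complex.I * x
        = (starRingEnd ℂ) (Complex.exp (Complex.I * (-x : ℝ)) - 1 - Complex.I * (-x : ℝ)) := by
      rw [map_sub, map_sub, ← Complex.exp_conj]
      simp [Complex.conj_I]
    rw [hc, RCLike.norm_conj]
    simpa using h

noncomputable section

/-- The space ℝⁿ. -/
abbrev En (n : ℕ) := EuclideanSpace ℝ (Fin n)

/-- The white noise probability space Ω = 𝒮'(ℝⁿ), the space of tempered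
distributions (the continuous dual of the Schwartz space), with the weak* topology. -/
abbrev WNSpace (n : ℕ) := WeakDual ℝ (SchwartzMap (En n) ℝ)

/-- The Borel σ-algebra on Ω. -/
instance (n : ℕ) : MeasurableSpace (WNSpace n) := borel _

/-- The Lévy exponent Ψ(w) = ∫ (e^{iwz} − 1 − iwz) ν(dz). -/
def levyExponent (ν : Measure ℝ) (w : ℝ) : ℂ :=
  ∫ z : ℝ, (Complex.exp (Complex.I * w * z) - 1 - Complex.I * w * z) ∂ν

lemma levy_bound (ν : Measure ℝ) (hM : Integrable (fun z : ℝ => z ^ 2) ν) (w : ℝ) :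
    ‖levyExponent ν w‖ ≤ (∫ z : ℝ, z ^ 2 ∂ν) * w ^ 2 := by
  have hb : ∀ z : ℝ,
      ‖Complex.exp (Complex.I * w * z) - 1 - Complex.I * w * z‖ ≤ z ^ 2 * w ^ 2 := by
    intro z
    have h := norm2 (w * z)
    have hcast : (Complex.I : ℂ) * ((w * z : ℝ) : ℂ) = Complex.I * w * z := by
      push_cast; ring
    rw [hcast] at h
    calc ‖Complex.exp (Complex.I * w * z) - 1 - Complex.I * w * z‖ ≤ (w * z) ^ 2 := h
      _ = z ^ 2 * w ^ 2 := by ring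
  calc ‖levyExponent ν w‖ ≤ ∫ z : ℝ, z ^ 2 * w ^ 2 ∂ν :=
        norm_integral_le_of_norm_le (hM.mul_const _) (Filter.Eventually.of_forall hb)
    _ = (∫ z : ℝ, z ^ 2 ∂ν) * w ^ 2 := integral_mul_const _ _

theorem expectation_pairing_eq_zero
    (n : ℕ) (hn : 1 ≤ n)
    (ν : Measure ℝ) (hν0 : ν {0} = 0)
    (hM : Integrable (fun z : ℝ => z ^ 2) ν)
    (P : Measure (WNSpace n)) [IsProbabilityMeasure P]
    (hBM : ∀ φ : SchwartzMap (En n) ℝ,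
      ∫ ω : WNSpace n, Complex.exp (Complex.I * (ω φ : ℝ)) ∂P
        = Complex.exp (∫ x : En n, levyExponent ν (φ x))) :
    ∀ φ : SchwartzMap (En n) ℝ, ∫ ω : WNSpace n, ω φ ∂P = 0 := by
  intro φ
  by_cases hint : Integrable (fun ω : WNSpace n => (ω φ : ℝ)) P
  swap
  · exact integral_undef hint
  set X : WNSpace n → ℝ := fun ω => ω φ with hXdef
  have hXm : AEStronglyMeasurable X P := hint.aestronglyMeasurable
  have hXc : AEStronglyMeasurable (fun ω => ((X ω : ℝ) : ℂ)) P :=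
    Complex.continuous_ofReal.comp_aestronglyMeasurable hXm
  set F : ℝ → WNSpace n → ℂ :=
    fun t ω => Complex.exp (Complex.I * t * (X ω : ℂ)) with hFdef
  set F' : ℝ → WNSpace n → ℂ :=
    fun t ω => Complex.exp (Complex.I * t * (X ω : ℂ)) * (Complex.I * (X ω : ℂ)) with hF'def
  -- derivative of the characteristic function at 0
  have hF_meas : ∀ᶠ t in nhds (0:ℝ), AEStronglyMeasurable (F t) P := by
    refine Filter.Eventually.of_forall (fun t => ?_)
    exact Complex.continuous_exp.comp_aestronglyMeasurable
      (hXc.const_mul (Complex.I * t))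
  have hF_int : Integrable (F 0) P := by
    have : F 0 = fun _ => (1 : ℂ) := by funext ω; simp [hFdef]
    rw [this]; exact integrable_const 1
  have hF'_meas : AEStronglyMeasurable (F' 0) P :=
    (Complex.continuous_exp.comp_aestronglyMeasurable
      (hXc.const_mul (Complex.I * (0:ℝ)))).mul (hXc.const_mul Complex.I)
  have hnormexp : ∀ (t : ℝ) (ω : WNSpace n), ‖Complex.exp (Complex.I * t * (X ω : ℂ))‖ = 1 := by
    intro t ω
    rw [Complex.norm_exp]
    simp
  have h_bound : ∀ᵐ ω ∂P, ∀ t ∈ Metric.ball (0:ℝ) 1, ‖F' t ω‖ ≤ |X ω| := by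
    refine Filter.Eventually.of_forall (fun ω t _ => ?_)
    rw [hF'def]
    simp only [norm_mul, hnormexp t ω, one_mul, Complex.norm_I, Complex.norm_real,
      Real.norm_eq_abs]
    exact le_rfl
  have bound_int : Integrable (fun ω => |X ω|) P := hint.abs
  have h_diff : ∀ᵐ ω ∂P, ∀ t ∈ Metric.ball (0:ℝ) 1, HasDerivAt (F · ω) (F' t ω) t :=
    Filter.Eventually.of_forall (fun ω t _ => hasDerivAt_exp_I_mul (X ω : ℂ) t)
  obtain ⟨-, hderiv1⟩ := hasDerivAt_integral_of_dominated_loc_of_deriv_le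
    (F := F) (F' := F') (x₀ := (0:ℝ)) (bound := fun ω => |X ω|) (Metric.ball_mem_nhds 0 one_pos)
    hF_meas hF_int hF'_meas h_bound bound_int h_diff
  have hF'0 : (fun ω => F' 0 ω) = fun ω => Complex.I * ((X ω : ℝ) : ℂ) := by
    funext ω; simp [hF'def]
  have hintC : ∫ ω, F' 0 ω ∂P = Complex.I * ((∫ ω, X ω ∂P : ℝ) : ℂ) := by
    rw [hF'0, integral_const_mul]
    congr 1
    exact integral_ofReal
  -- the function t ↦ ∫ levyExponent (t φ x)
  set Fc : ℝ → ℂ := fun t => ∫ x : En n, levyExponent ν (t * φ x) with hFcdef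
  have hg : ∀ t : ℝ, ∫ ω, F t ω ∂P = Complex.exp (Fc t) := by
    intro t
    have hBMt := hBM (t • φ)
    have l1 : (fun ω : WNSpace n => Complex.exp (Complex.I * ((ω (t • φ) : ℝ) : ℂ))) = F t := by
      funext ω
      rw [hFdef]
      have : ω (t • φ) = t * ω φ := by rw [map_smul]; rfl
      rw [this]
      push_cast
      ring_nf
      rfl
    have l2 : (fun x : En n => levyExponent ν ((t • φ) x))
        = fun x => levyExponent ν (t * φ x) := by
      funext x
      congr 1
    calc ∫ ω, F t ω ∂P = ∫ ω : WNSpace n, Complex.exp (Complex.I * ((ω (t • φ) : ℝ) : ℂ)) ∂P := by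
          rw [l1]
      _ = Complex.exp (∫ x : En n, levyExponent ν ((t • φ) x)) := hBMt
      _ = Complex.exp (Fc t) := by
          rw [show Fc t = ∫ x : En n, levyExponent ν (t * φ x) from rfl, ← l2]
  -- quadratic bound on Fc
  have hM0 : 0 ≤ ∫ z : ℝ, z ^ 2 ∂ν := integral_nonneg (fun z => sq_nonneg z)
  obtain ⟨C, -, hC⟩ := φ.decay 0 0
  have hCbound : ∀ x : En n, ‖φ x‖ ≤ C := by
    intro x
    have := hC x
    simpa using this
  have hφ2 : Integrable (fun x : En n => (φ x) ^ 2) (volume : Measure (En n)) := by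
    refine ((φ.integrable (μ := volume)).norm.const_mul C).mono'
      ((φ.continuous.mul φ.continuous).aestronglyMeasurable.congr ?_) ?_
    · exact Filter.Eventually.of_forall (fun x => by simp [sq])
    · refine Filter.Eventually.of_forall (fun x => ?_)
      have h1 : |φ x ^ 2| = |φ x| * |φ x| := by rw [_root_.abs_pow, sq]
      rw [Real.norm_eq_abs, h1]
      exact mul_le_mul_of_nonneg_right (by simpa [Real.norm_eq_abs] using hCbound x)
        (abs_nonneg _)
  have hFc_bound : ∀ t : ℝ,
      ‖Fc t‖ ≤ ((∫ z : ℝ, z ^ 2 ∂ν) * ∫ x : En n, (φ x) ^ 2) * t ^ 2 := by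
    intro t
    have hb : ∀ x : En n, ‖levyExponent ν (t * φ x)‖
        ≤ ((∫ z : ℝ, z ^ 2 ∂ν) * t ^ 2) * (φ x) ^ 2 := by
      intro x
      calc ‖levyExponent ν (t * φ x)‖ ≤ (∫ z : ℝ, z ^ 2 ∂ν) * (t * φ x) ^ 2 :=
            levy_bound ν hM _
        _ = ((∫ z : ℝ, z ^ 2 ∂ν) * t ^ 2) * (φ x) ^ 2 := by ring
    calc ‖Fc t‖ ≤ ∫ x : En n, ((∫ z : ℝ, z ^ 2 ∂ν) * t ^ 2) * (φ x) ^ 2 :=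
          norm_integral_le_of_norm_le (hφ2.const_mul _) (Filter.Eventually.of_forall hb)
      _ = ((∫ z : ℝ, z ^ 2 ∂ν) * ∫ x : En n, (φ x) ^ 2) * t ^ 2 := by
          rw [integral_const_mul]; ring
  have hFc0 : Fc 0 = 0 := by
    have : (fun x : En n => levyExponent ν (0 * φ x)) = fun _ => (0:ℂ) := by
      funext x
      rw [zero_mul]
      simp [levyExponent]
    rw [hFcdef]
    simp only [this, integral_zero]
  have hFcderiv : HasDerivAt Fc 0 0 := by
    rw [hasDerivAt_iff_isLittleO]
    simp only [hFc0, sub_zero, smul_zero, sub_zero]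
    have big : Fc =O[nhds (0:ℝ)] fun t => t ^ 2 :=
      Asymptotics.IsBigO.of_bound _ (Filter.Eventually.of_forall (fun t => by
        simpa [Real.norm_eq_abs, _root_.abs_of_nonneg (sq_nonneg t)] using hFc_bound t))
    have small : (fun t : ℝ => t ^ 2) =o[nhds (0:ℝ)] fun t => t := by
      have h := hasDerivAt_pow 2 (0:ℝ)
      rw [hasDerivAt_iff_isLittleO] at h
      simpa using h
    exact big.trans_isLittleO small
  have hgderiv2 : HasDerivAt (fun t => ∫ ω, F t ω ∂P) 0 0 := by
    have heq : (fun t => ∫ ω, F t ω ∂P) = fun t => Complex.exp (Fc t) := funext hg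
    rw [heq]
    simpa using hFcderiv.cexp
  have huniq : ∫ ω, F' 0 ω ∂P = 0 := hderiv1.unique hgderiv2
  rw [hintC] at huniq
  have : ((∫ ω, X ω ∂P : ℝ) : ℂ) = 0 := by
    rcases mul_eq_zero.1 huniq with h | h
    · exact absurd h Complex.I_ne_zero
    · exact h
  exact_mod_cast this
end
end

section
/- For all Schwartz functions φ₁, φ₂ ∈ S(ℝⁿ), one has ∫_Ω (⟨ω,φ₁⟩ − ⟨ω,φ₂⟩)² P(dω) = M ∫_{ℝⁿ} (φ₁(x) − φ₂(x))² dx = M ‖φ₁ − φ₂‖²_{L²(ℝⁿ)}, where M = ∫_ℝ z² ν(dz). -/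
open MeasureTheory Complex

noncomputable section

instance (n : ℕ) : BorelSpace (WNSpace n) := ⟨rfl⟩

open Filter
section Aux

lemma aux_integral_ofReal {α : Type*} [MeasurableSpace α] {μ : Measure α} (f : α → ℝ) :
    ∫ a, ((f a : ℝ) : ℂ) ∂μ = ((∫ a, f a ∂μ : ℝ) : ℂ) :=
  integral_ofReal

lemma aux_sum2 (w : ℝ) : ∑ m ∈ Finset.range 2, (Complex.I * w) ^ m / m.factorial
    = 1 + Complex.I * w := by
  simp [Finset.sum_range_succ]

lemma aux_norm_exp3 (w : ℝ) :
    ‖Complex.exp (Complex.I * w) - 1 - Complex.I * w‖ ≤ 3 * w ^ 2 := by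
  rcases le_or_gt |w| 1 with h | h
  · have h2 := Complex.exp_bound (x := Complex.I * w) (by simpa using h) (n := 2) (by norm_num)
    rw [aux_sum2] at h2
    have habs : ‖Complex.I * (w:ℂ)‖ = |w| := by simp
    rw [habs] at h2
    have : Complex.exp (Complex.I * w) - (1 + Complex.I * w)
        = Complex.exp (Complex.I * w) - 1 - Complex.I * w := by ring
    rw [this] at h2
    norm_num [Nat.factorial] at h2
    nlinarith [_root_.sq_abs w, norm_nonneg (Complex.exp (Complex.I * w) - 1 - Complex.I * w)]
  · have h1 : ‖Complex.exp (Complex.I * w)‖ = 1 := by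
      rw [mul_comm]; simpa using Complex.norm_exp_ofReal_mul_I w
    have h2 : ‖Complex.I * (w:ℂ)‖ = |w| := by simp
    calc ‖Complex.exp (Complex.I * w) - 1 - Complex.I * w‖
        ≤ ‖Complex.exp (Complex.I * w) - 1‖ + ‖Complex.I * (w:ℂ)‖ := norm_sub_le _ _
      _ ≤ ‖Complex.exp (Complex.I * w)‖ + ‖(1:ℂ)‖ + ‖Complex.I * (w:ℂ)‖ := by
          have := norm_sub_le (Complex.exp (Complex.I * w)) 1; linarith
      _ = 2 + |w| := by rw [h1, h2]; norm_num
      _ ≤ 3 * w ^ 2 := by nlinarith [_root_.sq_abs w, abs_nonneg w]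

lemma aux_norm_exp4 {w : ℝ} (h : |w| ≤ 1) :
    ‖Complex.exp (Complex.I * w) - 1 - Complex.I * w + (w:ℂ) ^ 2 / 2‖ ≤ |w| ^ 3 := by
  have h2 := Complex.exp_bound (x := Complex.I * w) (by simpa using h) (n := 3) (by norm_num)
  have hsum : ∑ m ∈ Finset.range 3, (Complex.I * w) ^ m / m.factorial
      = 1 + Complex.I * w - (w:ℂ) ^ 2 / 2 := by
    simp [Finset.sum_range_succ]
    ring_nf
    simp [Complex.I_sq]
    ring
  rw [hsum] at h2
  have habs : ‖Complex.I * (w:ℂ)‖ = |w| := by simp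
  rw [habs] at h2
  have he : Complex.exp (Complex.I * w) - (1 + Complex.I * w - (w:ℂ) ^ 2 / 2)
      = Complex.exp (Complex.I * w) - 1 - Complex.I * w + (w:ℂ) ^ 2 / 2 := by ring
  rw [he] at h2
  have h3 : (0:ℝ) ≤ |w| ^ 3 := by positivity
  norm_num [Nat.factorial] at h2
  nlinarith

lemma aux_cos_taylor {w : ℝ} (h : |w| ≤ 1) :
    |Real.cos w - 1 + w ^ 2 / 2| ≤ |w| ^ 3 := by
  have h1 := aux_norm_exp4 h
  have h2 : (Complex.exp (Complex.I * w) - 1 - Complex.I * w + (w:ℂ) ^ 2 / 2).re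
      = Real.cos w - 1 + w ^ 2 / 2 := by
    rw [mul_comm Complex.I (w:ℂ), Complex.exp_mul_I]
    simp [Complex.cos_ofReal_re, ← Complex.ofReal_pow]
  calc |Real.cos w - 1 + w ^ 2 / 2|
      = |(Complex.exp (Complex.I * w) - 1 - Complex.I * w + (w:ℂ) ^ 2 / 2).re| := by rw [h2]
    _ ≤ ‖Complex.exp (Complex.I * w) - 1 - Complex.I * w + (w:ℂ) ^ 2 / 2‖ :=
        Complex.abs_re_le_norm _
    _ ≤ |w| ^ 3 := h1

lemma aux_one_sub_cos (v : ℝ) : 2 * (1 - Real.cos v) ≤ v ^ 2 := by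
  have h1 : Real.cos v = 1 - 2 * Real.sin (v / 2) ^ 2 := by
    have := Real.cos_two_mul (v / 2)
    rw [show 2 * (v/2) = v by ring] at this
    rw [this, Real.cos_sq']
    ring
  have h2 : Real.sin (v / 2) ^ 2 ≤ (v / 2) ^ 2 := by
    have := Real.abs_sin_le_abs (x := v / 2)
    calc Real.sin (v/2) ^ 2 = |Real.sin (v/2)| ^ 2 := (_root_.sq_abs _).symm
      _ ≤ |v/2| ^ 2 := by nlinarith [abs_nonneg (Real.sin (v/2))]
      _ = (v/2) ^ 2 := _root_.sq_abs _
  nlinarith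

lemma aux_eventually_abs_lt {δ : ℝ} (hδ : 0 < δ) :
    ∀ᶠ t in nhdsWithin (0:ℝ) {0}ᶜ, |t| < δ := by
  apply Filter.eventually_iff_exists_mem.2
  refine ⟨{0}ᶜ ∩ Metric.ball 0 δ, inter_mem_nhdsWithin _ (Metric.ball_mem_nhds 0 hδ), ?_⟩
  rintro t ⟨-, ht⟩
  simpa [Real.dist_eq] using ht

lemma aux_tendsto_cos (u : ℝ) :
    Tendsto (fun t : ℝ => 2 * (1 - Real.cos (t * u)) / t ^ 2)
      (nhdsWithin (0:ℝ) {0}ᶜ) (nhds (u ^ 2)) := by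
  have hδ : 0 < 1 / (|u| + 1) := by positivity
  have hbd : ∀ᶠ t in nhdsWithin (0:ℝ) {0}ᶜ,
      ‖2 * (1 - Real.cos (t * u)) / t ^ 2 - u ^ 2‖ ≤ 2 * |u| ^ 3 * |t| := by
    filter_upwards [aux_eventually_abs_lt hδ, self_mem_nhdsWithin] with t ht ht0
    have ht0' : t ≠ 0 := ht0
    have htu : |t * u| ≤ 1 := by
      rw [abs_mul]
      rcases le_or_gt (|u|) 0 with h | h
      · have : |u| = 0 := le_antisymm h (abs_nonneg u); simp [this]
      · have h1 : |t| ≤ 1 / (|u| + 1) := ht.le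
        calc |t| * |u| ≤ (1 / (|u| + 1)) * |u| := by
              apply mul_le_mul_of_nonneg_right h1 (abs_nonneg u)
          _ ≤ 1 := by
              rw [div_mul_eq_mul_div, div_le_one (by positivity)]; nlinarith
    have hc := aux_cos_taylor htu
    have ht2 : (0:ℝ) < t ^ 2 := by positivity
    have key : 2 * (1 - Real.cos (t * u)) / t ^ 2 - u ^ 2
        = -(2 / t ^ 2) * (Real.cos (t * u) - 1 + (t * u) ^ 2 / 2) := by
      field_simp
      ring
    rw [key]
    rw [Real.norm_eq_abs, abs_mul, abs_neg, abs_div]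
    have : |(2:ℝ)| / |t ^ 2| = 2 / t ^ 2 := by
      rw [_root_.abs_of_nonneg (by norm_num : (0:ℝ) ≤ 2), _root_.abs_of_nonneg (le_of_lt ht2)]
    rw [this]
    calc 2 / t ^ 2 * |Real.cos (t * u) - 1 + (t * u) ^ 2 / 2|
        ≤ 2 / t ^ 2 * |t * u| ^ 3 := by
          apply mul_le_mul_of_nonneg_left hc (by positivity)
      _ = 2 * |u| ^ 3 * |t| := by
          rw [abs_mul, mul_pow]
          rw [show |t| ^ 3 = |t| ^ 2 * |t| by ring, _root_.sq_abs]
          field_simp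
  have hlim : Tendsto (fun t : ℝ => 2 * |u| ^ 3 * |t|) (nhdsWithin (0:ℝ) {0}ᶜ) (nhds 0) := by
    have : Tendsto (fun t : ℝ => 2 * |u| ^ 3 * |t|) (nhds (0:ℝ)) (nhds (2 * |u| ^ 3 * |0|)) := by
      exact (continuous_const.mul _root_.continuous_abs).tendsto 0
    simpa using this.mono_left nhdsWithin_le_nhds
  have h0 : Tendsto (fun t : ℝ => 2 * (1 - Real.cos (t * u)) / t ^ 2 - u ^ 2)
      (nhdsWithin (0:ℝ) {0}ᶜ) (nhds 0) := squeeze_zero_norm' hbd hlim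
  have := h0.add (tendsto_const_nhds (x := u ^ 2) (f := nhdsWithin (0:ℝ) {0}ᶜ))
  simpa using this

lemma aux_tendsto_exp (u : ℝ) :
    Tendsto (fun t : ℝ =>
        (Complex.exp (Complex.I * ((t*u : ℝ):ℂ)) - 1 - Complex.I * ((t*u : ℝ):ℂ)) / (t:ℂ) ^ 2)
      (nhdsWithin (0:ℝ) {0}ᶜ) (nhds ((-(u ^ 2) / 2 : ℝ) : ℂ)) := by
  have hδ : 0 < 1 / (|u| + 1) := by positivity
  have hbd : ∀ᶠ t in nhdsWithin (0:ℝ) {0}ᶜ,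
      ‖(Complex.exp (Complex.I * ((t*u : ℝ):ℂ)) - 1 - Complex.I * ((t*u : ℝ):ℂ)) / (t:ℂ) ^ 2
        - ((-(u ^ 2) / 2 : ℝ) : ℂ)‖ ≤ |u| ^ 3 * |t| := by
    filter_upwards [aux_eventually_abs_lt hδ, self_mem_nhdsWithin] with t ht ht0
    have ht0' : t ≠ 0 := ht0
    have htc : (t:ℂ) ^ 2 ≠ 0 := by
      simp [pow_eq_zero_iff, Complex.ofReal_eq_zero, ht0']
    have htu : |t * u| ≤ 1 := by
      rw [abs_mul]
      rcases le_or_gt (|u|) 0 with h | h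
      · have : |u| = 0 := le_antisymm h (abs_nonneg u); simp [this]
      · calc |t| * |u| ≤ (1 / (|u| + 1)) * |u| :=
              mul_le_mul_of_nonneg_right ht.le (abs_nonneg u)
          _ ≤ 1 := by
              rw [div_mul_eq_mul_div, div_le_one (by positivity)]; nlinarith
    have key : (Complex.exp (Complex.I * ((t*u : ℝ):ℂ)) - 1 - Complex.I * ((t*u : ℝ):ℂ)) / (t:ℂ) ^ 2
        - ((-(u ^ 2) / 2 : ℝ) : ℂ)
        = (Complex.exp (Complex.I * ((t*u : ℝ):ℂ)) - 1 - Complex.I * ((t*u : ℝ):ℂ)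
            + ((t*u : ℝ):ℂ) ^ 2 / 2) / (t:ℂ) ^ 2 := by
      rw [eq_div_iff htc, sub_mul, div_mul_cancel₀ _ htc]
      push_cast
      ring
    rw [key, norm_div]
    have h1 := aux_norm_exp4 htu
    have h2 : ‖(t:ℂ) ^ 2‖ = t ^ 2 := by
      rw [norm_pow, Complex.norm_real, Real.norm_eq_abs, _root_.sq_abs]
    rw [h2]
    have ht2 : (0:ℝ) < t ^ 2 := by positivity
    rw [div_le_iff₀ ht2]
    calc ‖Complex.exp (Complex.I * ((t*u : ℝ):ℂ)) - 1 - Complex.I * ((t*u : ℝ):ℂ)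
            + ((t*u : ℝ):ℂ) ^ 2 / 2‖ ≤ |t * u| ^ 3 := h1
      _ = |u| ^ 3 * |t| * t ^ 2 := by
          rw [abs_mul, mul_pow]
          rw [show |t| ^ 3 = |t| ^ 2 * |t| by ring, _root_.sq_abs]
          ring
  have hlim : Tendsto (fun t : ℝ => |u| ^ 3 * |t|) (nhdsWithin (0:ℝ) {0}ᶜ) (nhds 0) := by
    have : Tendsto (fun t : ℝ => |u| ^ 3 * |t|) (nhds (0:ℝ)) (nhds (|u| ^ 3 * |0|)) :=
      (continuous_const.mul _root_.continuous_abs).tendsto 0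
    simpa using this.mono_left nhdsWithin_le_nhds
  have h0 := squeeze_zero_norm' hbd hlim
  have := h0.add (tendsto_const_nhds (x := ((-(u ^ 2) / 2 : ℝ) : ℂ))
    (f := nhdsWithin (0:ℝ) {0}ᶜ))
  simpa using this

lemma aux_cast (w z : ℝ) : Complex.I * (w:ℂ) * (z:ℂ) = Complex.I * ((w*z : ℝ):ℂ) := by
  push_cast; ring

lemma aux_integrable_kernel {ν : Measure ℝ} (hM : Integrable (fun z : ℝ => z ^ 2) ν) (w : ℝ) :
    Integrable (fun z : ℝ =>
      Complex.exp (Complex.I * (w:ℂ) * (z:ℂ)) - 1 - Complex.I * (w:ℂ) * (z:ℂ)) ν := by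
  apply Integrable.mono' (g := fun z : ℝ => 3 * w ^ 2 * z ^ 2) (hM.const_mul (3 * w ^ 2))
  · apply Continuous.aestronglyMeasurable
    continuity
  · filter_upwards with z
    rw [aux_cast]
    calc ‖Complex.exp (Complex.I * ((w*z : ℝ):ℂ)) - 1 - Complex.I * ((w*z : ℝ):ℂ)‖
        ≤ 3 * (w*z) ^ 2 := aux_norm_exp3 (w*z)
      _ = 3 * w ^ 2 * z ^ 2 := by ring

lemma aux_levy_norm_le {ν : Measure ℝ} (hM : Integrable (fun z : ℝ => z ^ 2) ν) (w : ℝ) :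
    ‖levyExponent ν w‖ ≤ 3 * (∫ z : ℝ, z ^ 2 ∂ν) * w ^ 2 := by
  have h := norm_integral_le_of_norm_le (f := fun z : ℝ =>
      Complex.exp (Complex.I * (w:ℂ) * (z:ℂ)) - 1 - Complex.I * (w:ℂ) * (z:ℂ))
    (hM.const_mul (3 * w ^ 2)) ?_
  · calc ‖levyExponent ν w‖ ≤ ∫ z : ℝ, 3 * w ^ 2 * z ^ 2 ∂ν := h
      _ = 3 * (∫ z : ℝ, z ^ 2 ∂ν) * w ^ 2 := by
          rw [integral_const_mul]; ring
  · filter_upwards with z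
    rw [aux_cast]
    calc ‖Complex.exp (Complex.I * ((w*z : ℝ):ℂ)) - 1 - Complex.I * ((w*z : ℝ):ℂ)‖
        ≤ 3 * (w*z) ^ 2 := aux_norm_exp3 (w*z)
      _ = 3 * w ^ 2 * z ^ 2 := by ring

lemma aux_levy_continuous {ν : Measure ℝ} (hM : Integrable (fun z : ℝ => z ^ 2) ν) :
    Continuous (levyExponent ν) := by
  rw [continuous_iff_continuousAt]
  intro w₀
  have hev : ∀ᶠ w in nhds w₀, |w| ≤ |w₀| + 1 := by
    have hball : Metric.ball w₀ 1 ∈ nhds w₀ := Metric.ball_mem_nhds w₀ one_pos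
    filter_upwards [hball] with w hw
    have : |w - w₀| < 1 := by simpa [Real.dist_eq] using hw
    calc |w| = |(w - w₀) + w₀| := by ring_nf
      _ ≤ |w - w₀| + |w₀| := abs_add_le _ _
      _ ≤ |w₀| + 1 := by linarith
  apply tendsto_integral_filter_of_dominated_convergence
    (bound := fun z : ℝ => 3 * (|w₀| + 1) ^ 2 * z ^ 2)
  · filter_upwards with w
    apply Continuous.aestronglyMeasurable
    continuity
  · filter_upwards [hev] with w hw
    filter_upwards with z
    rw [aux_cast]
    calc ‖Complex.exp (Complex.I * ((w*z : ℝ):ℂ)) - 1 - Complex.I * ((w*z : ℝ):ℂ)‖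
        ≤ 3 * (w*z) ^ 2 := aux_norm_exp3 (w*z)
      _ = 3 * w ^ 2 * z ^ 2 := by ring
      _ ≤ 3 * (|w₀| + 1) ^ 2 * z ^ 2 := by
          have h1 : w ^ 2 ≤ (|w₀| + 1) ^ 2 := by
            rw [← _root_.sq_abs w]
            apply pow_le_pow_left₀ (abs_nonneg w) hw
          nlinarith [sq_nonneg z]
  · exact hM.const_mul _
  · filter_upwards with z
    apply Continuous.tendsto
    continuity

lemma aux_levy_tendsto {ν : Measure ℝ} (hM : Integrable (fun z : ℝ => z ^ 2) ν) (u : ℝ) :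
    Tendsto (fun t : ℝ => levyExponent ν (t * u) / (t:ℂ) ^ 2)
      (nhdsWithin (0:ℝ) {0}ᶜ) (nhds ((-(∫ z : ℝ, z ^ 2 ∂ν) * u ^ 2 / 2 : ℝ) : ℂ)) := by
  have heq : ∀ t : ℝ, levyExponent ν (t * u) / (t:ℂ) ^ 2
      = ∫ z : ℝ, (Complex.exp (Complex.I * ((t*u : ℝ):ℂ) * (z:ℂ)) - 1
          - Complex.I * ((t*u : ℝ):ℂ) * (z:ℂ)) / (t:ℂ) ^ 2 ∂ν := by
    intro t
    rw [levyExponent, integral_div]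
  have hlimint : ((-(∫ z : ℝ, z ^ 2 ∂ν) * u ^ 2 / 2 : ℝ) : ℂ)
      = ∫ z : ℝ, ((-( (u*z) ^ 2) / 2 : ℝ) : ℂ) ∂ν := by
    rw [aux_integral_ofReal]
    norm_cast
    have : ∀ z : ℝ, -((u*z) ^ 2) / 2 = (-(u ^ 2) / 2) * z ^ 2 := by intro z; ring
    simp_rw [this, integral_const_mul]
    ring
  simp_rw [heq]
  rw [hlimint]
  apply tendsto_integral_filter_of_dominated_convergence
    (bound := fun z : ℝ => 3 * u ^ 2 * z ^ 2)
  · filter_upwards with t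
    apply Continuous.aestronglyMeasurable
    continuity
  · filter_upwards [self_mem_nhdsWithin] with t ht0
    have ht0' : (t:ℝ) ≠ 0 := ht0
    filter_upwards with z
    rw [norm_div]
    have h2 : ‖(t:ℂ) ^ 2‖ = t ^ 2 := by
      rw [norm_pow, Complex.norm_real, Real.norm_eq_abs, _root_.sq_abs]
    rw [h2, div_le_iff₀ (by positivity)]
    calc ‖Complex.exp (Complex.I * ((t*u : ℝ):ℂ) * (z:ℂ)) - 1
          - Complex.I * ((t*u : ℝ):ℂ) * (z:ℂ)‖
        = ‖Complex.exp (Complex.I * ((t*u*z : ℝ):ℂ)) - 1 - Complex.I * ((t*u*z : ℝ):ℂ)‖ := by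
          rw [aux_cast]
      _ ≤ 3 * (t*u*z) ^ 2 := aux_norm_exp3 (t*u*z)
      _ = 3 * u ^ 2 * z ^ 2 * t ^ 2 := by ring
  · exact hM.const_mul _
  · filter_upwards with z
    have h := aux_tendsto_exp (u * z)
    have heq2 : ∀ t : ℝ, (Complex.exp (Complex.I * ((t*(u*z) : ℝ):ℂ)) - 1
          - Complex.I * ((t*(u*z) : ℝ):ℂ)) / (t:ℂ) ^ 2
        = (Complex.exp (Complex.I * ((t*u : ℝ):ℂ) * (z:ℂ)) - 1
          - Complex.I * ((t*u : ℝ):ℂ) * (z:ℂ)) / (t:ℂ) ^ 2 := by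
      intro t
      rw [aux_cast]
      norm_cast
      rw [show t*u*z = t*(u*z) by ring]
    simp_rw [heq2] at h
    exact h

lemma aux_schwartz_sq_integrable {n : ℕ} (φ : SchwartzMap (En n) ℝ) :
    Integrable (fun x : En n => (φ x) ^ 2) := by
  obtain ⟨C, hC⟩ := φ.decay' 0 0
  simp only [pow_zero, one_mul, norm_iteratedFDeriv_zero] at hC
  apply Integrable.mono' ((φ.integrable (μ := volume)).norm.const_mul C)
  · exact (φ.continuous.pow 2).aestronglyMeasurable
  · filter_upwards with x
    have h1 : ‖φ x‖ ≤ C := hC x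
    rw [Real.norm_eq_abs, _root_.abs_pow]
    have h2 : |φ x| = ‖φ x‖ := rfl
    rw [h2]
    nlinarith [norm_nonneg (φ x)]

lemma aux_norm_exp_sub {x : ℂ} (h : ‖x‖ ≤ 1) : ‖Complex.exp x - 1 - x‖ ≤ ‖x‖ ^ 2 := by
  have h2 := Complex.exp_bound (x := x) (by exact h) (n := 2) (by norm_num)
  have hsum : ∑ m ∈ Finset.range 2, x ^ m / m.factorial = 1 + x := by
    simp [Finset.sum_range_succ]
  rw [hsum] at h2
  norm_num [Nat.factorial] at h2
  rw [show Complex.exp x - 1 - x = Complex.exp x - (1 + x) by ring]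
  calc ‖Complex.exp x - (1 + x)‖ ≤ ‖x‖ ^ 2 * (3/4) := h2
    _ ≤ ‖x‖ ^ 2 := by nlinarith [norm_nonneg x]

lemma aux_remainder {g : ℝ → ℂ} {C : ℝ} (hg : ∀ t : ℝ, ‖g t‖ ≤ C * t ^ 2) :
    Tendsto (fun t : ℝ => (Complex.exp (g t) - 1 - g t) / (t:ℂ) ^ 2)
      (nhdsWithin (0:ℝ) {0}ᶜ) (nhds 0) := by
  have hC : 0 ≤ C := le_trans (norm_nonneg (g 1)) (by simpa using hg 1)
  have hev : ∀ᶠ t in nhdsWithin (0:ℝ) {0}ᶜ, ‖g t‖ ≤ 1 := by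
    have hδ : (0:ℝ) < 1 / (C + 1) := by positivity
    filter_upwards [aux_eventually_abs_lt (Real.sqrt_pos.2 hδ)] with t ht
    have h1 : t ^ 2 < 1 / (C + 1) := by
      have := Real.sq_sqrt hδ.le
      calc t ^ 2 = |t| ^ 2 := (_root_.sq_abs t).symm
        _ < Real.sqrt (1 / (C+1)) ^ 2 := by
            nlinarith [abs_nonneg t, Real.sqrt_nonneg (1/(C+1))]
        _ = 1 / (C + 1) := this
    calc ‖g t‖ ≤ C * t ^ 2 := hg t
      _ ≤ C * (1 / (C + 1)) := by nlinarith
      _ ≤ 1 := by rw [mul_one_div, div_le_one (by positivity)]; linarith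
  have hbd : ∀ᶠ t in nhdsWithin (0:ℝ) {0}ᶜ,
      ‖(Complex.exp (g t) - 1 - g t) / (t:ℂ) ^ 2‖ ≤ C ^ 2 * t ^ 2 := by
    filter_upwards [hev, self_mem_nhdsWithin] with t h1 ht0
    have ht0' : (t:ℝ) ≠ 0 := ht0
    rw [norm_div]
    have h2 : ‖(t:ℂ) ^ 2‖ = t ^ 2 := by
      rw [norm_pow, Complex.norm_real, Real.norm_eq_abs, _root_.sq_abs]
    rw [h2, div_le_iff₀ (by positivity)]
    calc ‖Complex.exp (g t) - 1 - g t‖ ≤ ‖g t‖ ^ 2 := aux_norm_exp_sub h1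
      _ ≤ (C * t ^ 2) ^ 2 := by nlinarith [norm_nonneg (g t), hg t]
      _ = C ^ 2 * t ^ 2 * t ^ 2 := by ring
  have hlim : Tendsto (fun t : ℝ => C ^ 2 * t ^ 2) (nhdsWithin (0:ℝ) {0}ᶜ) (nhds 0) := by
    have : Tendsto (fun t : ℝ => C ^ 2 * t ^ 2) (nhds (0:ℝ)) (nhds (C ^ 2 * 0 ^ 2)) :=
      (continuous_const.mul (continuous_pow 2)).tendsto 0
    simpa using this.mono_left nhdsWithin_le_nhds
  exact squeeze_zero_norm' hbd hlim

lemma aux_neg_tendsto : Tendsto (fun t : ℝ => -t) (nhdsWithin (0:ℝ) {0}ᶜ)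
    (nhdsWithin (0:ℝ) {0}ᶜ) := by
  apply tendsto_nhdsWithin_of_tendsto_nhds_of_eventually_within
  · have := (continuous_neg : Continuous fun t : ℝ => -t).tendsto 0
    simpa using this.mono_left nhdsWithin_le_nhds
  · filter_upwards [self_mem_nhdsWithin] with t ht
    have : t ≠ 0 := ht
    simpa using this

lemma aux_two_sub (v : ℝ) : ((2*(1 - Real.cos v) : ℝ) : ℂ)
    = 2 - Complex.exp (Complex.I * (v:ℂ)) - Complex.exp (Complex.I * ((-v : ℝ):ℂ)) := by
  rw [mul_comm Complex.I (v:ℂ), Complex.exp_mul_I]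
  rw [show ((-v:ℝ):ℂ) = -(v:ℂ) by push_cast; ring]
  rw [mul_comm Complex.I (-(v:ℂ)), Complex.exp_mul_I]
  rw [Complex.cos_neg, Complex.sin_neg]
  rw [Complex.ofReal_mul, Complex.ofReal_sub, Complex.ofReal_cos]
  push_cast
  ring

lemma aux_h_norm {n : ℕ} {ν : Measure ℝ} (hM : Integrable (fun z : ℝ => z ^ 2) ν)
    (φ : SchwartzMap (En n) ℝ) (t : ℝ) :
    ‖∫ x : En n, levyExponent ν (t * φ x)‖
      ≤ (3 * (∫ z : ℝ, z ^ 2 ∂ν) * (∫ x : En n, (φ x) ^ 2)) * t ^ 2 := by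
  have hint : Integrable (fun x : En n => 3 * (∫ z : ℝ, z ^ 2 ∂ν) * t ^ 2 * (φ x) ^ 2) :=
    (aux_schwartz_sq_integrable φ).const_mul _
  have h := norm_integral_le_of_norm_le (f := fun x : En n => levyExponent ν (t * φ x)) hint ?_
  · calc ‖∫ x : En n, levyExponent ν (t * φ x)‖
        ≤ ∫ x : En n, 3 * (∫ z : ℝ, z ^ 2 ∂ν) * t ^ 2 * (φ x) ^ 2 := h
      _ = (3 * (∫ z : ℝ, z ^ 2 ∂ν) * (∫ x : En n, (φ x) ^ 2)) * t ^ 2 := by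
          rw [integral_const_mul]; ring
  · filter_upwards with x
    calc ‖levyExponent ν (t * φ x)‖ ≤ 3 * (∫ z : ℝ, z ^ 2 ∂ν) * (t * φ x) ^ 2 :=
          aux_levy_norm_le hM (t * φ x)
      _ = 3 * (∫ z : ℝ, z ^ 2 ∂ν) * t ^ 2 * (φ x) ^ 2 := by ring

lemma aux_h_tendsto {n : ℕ} {ν : Measure ℝ} (hM : Integrable (fun z : ℝ => z ^ 2) ν)
    (φ : SchwartzMap (En n) ℝ) :
    Tendsto (fun t : ℝ => (∫ x : En n, levyExponent ν (t * φ x)) / (t:ℂ) ^ 2)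
      (nhdsWithin (0:ℝ) {0}ᶜ)
      (nhds ((-(∫ z : ℝ, z ^ 2 ∂ν) * (∫ x : En n, (φ x) ^ 2) / 2 : ℝ) : ℂ)) := by
  have heq : ∀ t : ℝ, (∫ x : En n, levyExponent ν (t * φ x)) / (t:ℂ) ^ 2
      = ∫ x : En n, levyExponent ν (t * φ x) / (t:ℂ) ^ 2 := fun t => (integral_div _ _).symm
  have hlimint : ((-(∫ z : ℝ, z ^ 2 ∂ν) * (∫ x : En n, (φ x) ^ 2) / 2 : ℝ) : ℂ)
      = ∫ x : En n, ((-(∫ z : ℝ, z ^ 2 ∂ν) * (φ x) ^ 2 / 2 : ℝ) : ℂ) := by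
    rw [aux_integral_ofReal]
    norm_cast
    have : ∀ x : En n, -(∫ z : ℝ, z ^ 2 ∂ν) * (φ x) ^ 2 / 2
        = (-(∫ z : ℝ, z ^ 2 ∂ν) / 2) * (φ x) ^ 2 := fun x => by ring
    simp_rw [this, integral_const_mul]
    ring
  simp_rw [heq]
  rw [hlimint]
  apply tendsto_integral_filter_of_dominated_convergence
    (bound := fun x : En n => 3 * (∫ z : ℝ, z ^ 2 ∂ν) * (φ x) ^ 2)
  · filter_upwards with t
    apply Continuous.aestronglyMeasurable
    exact ((aux_levy_continuous hM).comp (continuous_const.mul φ.continuous)).div_const _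
  · filter_upwards [self_mem_nhdsWithin] with t ht0
    have ht0' : (t:ℝ) ≠ 0 := ht0
    filter_upwards with x
    rw [norm_div]
    have h2 : ‖(t:ℂ) ^ 2‖ = t ^ 2 := by
      rw [norm_pow, Complex.norm_real, Real.norm_eq_abs, _root_.sq_abs]
    rw [h2, div_le_iff₀ (by positivity)]
    calc ‖levyExponent ν (t * φ x)‖ ≤ 3 * (∫ z : ℝ, z ^ 2 ∂ν) * (t * φ x) ^ 2 :=
          aux_levy_norm_le hM (t * φ x)
      _ = 3 * (∫ z : ℝ, z ^ 2 ∂ν) * (φ x) ^ 2 * t ^ 2 := by ring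
  · exact (aux_schwartz_sq_integrable φ).const_mul _
  · filter_upwards with x
    have h := aux_levy_tendsto hM (φ x)
    have : ((-(∫ z : ℝ, z ^ 2 ∂ν) * (φ x) ^ 2 / 2 : ℝ) : ℂ)
        = ((-(∫ z : ℝ, z ^ 2 ∂ν) * (φ x) ^ 2 / 2 : ℝ) : ℂ) := rfl
    exact h

lemma aux_char_tendsto {n : ℕ} {ν : Measure ℝ} (hM : Integrable (fun z : ℝ => z ^ 2) ν)
    (φ : SchwartzMap (En n) ℝ) :
    Tendsto (fun t : ℝ => (2 - Complex.exp (∫ x : En n, levyExponent ν (t * φ x))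
        - Complex.exp (∫ x : En n, levyExponent ν (-t * φ x))) / (t:ℂ) ^ 2)
      (nhdsWithin (0:ℝ) {0}ᶜ)
      (nhds ((((∫ z : ℝ, z ^ 2 ∂ν) * (∫ x : En n, (φ x) ^ 2) : ℝ)) : ℂ)) := by
  have A1 := aux_h_tendsto hM φ
  have A2 : Tendsto (fun t : ℝ => (∫ x : En n, levyExponent ν (-t * φ x)) / (t:ℂ) ^ 2)
      (nhdsWithin (0:ℝ) {0}ᶜ)
      (nhds ((-(∫ z : ℝ, z ^ 2 ∂ν) * (∫ x : En n, (φ x) ^ 2) / 2 : ℝ) : ℂ)) := by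
    have h := (aux_h_tendsto hM φ).comp aux_neg_tendsto
    apply h.congr
    intro t
    simp [Function.comp, neg_sq]
  have A3 : Tendsto (fun t : ℝ =>
      (Complex.exp (∫ x : En n, levyExponent ν (t * φ x)) - 1
        - (∫ x : En n, levyExponent ν (t * φ x))) / (t:ℂ) ^ 2)
      (nhdsWithin (0:ℝ) {0}ᶜ) (nhds 0) :=
    aux_remainder (fun t => aux_h_norm hM φ t)
  have A4 : Tendsto (fun t : ℝ =>
      (Complex.exp (∫ x : En n, levyExponent ν (-t * φ x)) - 1
        - (∫ x : En n, levyExponent ν (-t * φ x))) / (t:ℂ) ^ 2)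
      (nhdsWithin (0:ℝ) {0}ᶜ) (nhds 0) := by
    apply aux_remainder (g := fun t => ∫ x : En n, levyExponent ν (-t * φ x))
    intro t
    have := aux_h_norm hM φ (-t)
    simpa using this
  have T := ((A1.neg.add A2.neg).add A3.neg).add A4.neg
  have hval : (((-(((-(∫ z : ℝ, z ^ 2 ∂ν) * (∫ x : En n, (φ x) ^ 2) / 2 : ℝ)) : ℂ)
      + -(((-(∫ z : ℝ, z ^ 2 ∂ν) * (∫ x : En n, (φ x) ^ 2) / 2 : ℝ)) : ℂ)) + -0) + -0 : ℂ)
      = ((((∫ z : ℝ, z ^ 2 ∂ν) * (∫ x : En n, (φ x) ^ 2) : ℝ)) : ℂ) := by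
    push_cast
    ring
  rw [hval] at T
  apply T.congr'
  filter_upwards [self_mem_nhdsWithin] with t ht0
  have ht0' : (t:ℂ) ^ 2 ≠ 0 := by
    simp [pow_eq_zero_iff, Complex.ofReal_eq_zero]
    exact ht0
  field_simp
  ring

lemma aux_key {n : ℕ} (ν : Measure ℝ)
    (hM : Integrable (fun z : ℝ => z ^ 2) ν)
    (P : Measure (WNSpace n)) [IsProbabilityMeasure P]
    (hBM : ∀ φ : SchwartzMap (En n) ℝ,
      ∫ ω : WNSpace n, Complex.exp (Complex.I * (ω φ : ℝ)) ∂P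
        = Complex.exp (∫ x : En n, levyExponent ν (φ x)))
    (φ : SchwartzMap (En n) ℝ) :
    ∫ ω : WNSpace n, (ω φ : ℝ) ^ 2 ∂P
      = (∫ z : ℝ, z ^ 2 ∂ν) * ∫ x : En n, (φ x) ^ 2 := by
  set X : WNSpace n → ℝ := fun ω => ω φ with hX
  have hXm : Measurable X := (WeakDual.eval_continuous φ).measurable
  -- characteristic function identity
  have hchar : ∀ s : ℝ, (∫ ω : WNSpace n, Complex.exp (Complex.I * ((s * X ω : ℝ):ℂ)) ∂P)
      = Complex.exp (∫ x : En n, levyExponent ν (s * φ x)) := by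
    intro s
    have h := hBM (s • φ)
    have e1 : ∀ ω : WNSpace n, ω (s • φ) = s * X ω := fun ω => by
      rw [_root_.map_smul]; rfl
    simp only [e1, SchwartzMap.smul_apply, smul_eq_mul] at h
    exact h
  -- integrability of the exponentials
  have hexpint : ∀ s : ℝ,
      Integrable (fun ω : WNSpace n => Complex.exp (Complex.I * ((s * X ω : ℝ):ℂ))) P := by
    intro s
    have hm : AEStronglyMeasurable
        (fun ω : WNSpace n => Complex.exp (Complex.I * ((s * X ω : ℝ):ℂ))) P := by
      have hc : Continuous (fun r : ℝ => Complex.exp (Complex.I * (r:ℂ))) := by continuity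
      exact hc.comp_aestronglyMeasurable (hXm.const_mul s).aestronglyMeasurable
    apply Integrable.mono' (integrable_const (1:ℝ)) hm
    filter_upwards with ω
    rw [mul_comm, Complex.norm_exp_ofReal_mul_I]
  -- the real cosine integral identity
  have hreal : ∀ t : ℝ, (((∫ ω : WNSpace n, 2 * (1 - Real.cos (t * X ω)) ∂P : ℝ)) : ℂ)
      = 2 - Complex.exp (∫ x : En n, levyExponent ν (t * φ x))
        - Complex.exp (∫ x : En n, levyExponent ν (-t * φ x)) := by
    intro t
    rw [← aux_integral_ofReal]
    have step1 : (∫ ω : WNSpace n, ((2 * (1 - Real.cos (t * X ω)) : ℝ) : ℂ) ∂P)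
        = ∫ ω : WNSpace n, (2 - Complex.exp (Complex.I * ((t * X ω : ℝ):ℂ))
            - Complex.exp (Complex.I * ((-t * X ω : ℝ):ℂ))) ∂P := by
      apply integral_congr_ae
      filter_upwards with ω
      have := aux_two_sub (t * X ω)
      rw [this]
      norm_num
    rw [step1]
    have i1 : Integrable (fun ω : WNSpace n =>
        (2:ℂ) - Complex.exp (Complex.I * ((t * X ω : ℝ):ℂ))) P :=
      (integrable_const (2:ℂ)).sub (hexpint t)
    rw [integral_sub i1 (hexpint (-t)), integral_sub (integrable_const (2:ℂ)) (hexpint t)]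
    have h2 : (∫ _ : WNSpace n, (2:ℂ) ∂P) = 2 := by
      simp [integral_const, measure_univ]
    rw [h2, hchar t, hchar (-t)]
  -- convergence of the normalized cosine integrals
  have hJ : Tendsto (fun t : ℝ => (∫ ω : WNSpace n, 2 * (1 - Real.cos (t * X ω)) ∂P) / t ^ 2)
      (nhdsWithin (0:ℝ) {0}ᶜ)
      (nhds ((∫ z : ℝ, z ^ 2 ∂ν) * (∫ x : En n, (φ x) ^ 2))) := by
    have hc := aux_char_tendsto hM φ
    have hT := (Complex.continuous_re.tendsto _).comp hc
    have hre : ((((∫ z : ℝ, z ^ 2 ∂ν) * (∫ x : En n, (φ x) ^ 2) : ℝ)) : ℂ).re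
        = (∫ z : ℝ, z ^ 2 ∂ν) * (∫ x : En n, (φ x) ^ 2) := Complex.ofReal_re _
    rw [hre] at hT
    apply hT.congr
    intro t
    have hJt : (((((∫ ω : WNSpace n, 2 * (1 - Real.cos (t * X ω)) ∂P) / t ^ 2 : ℝ))) : ℂ)
        = (2 - Complex.exp (∫ x : En n, levyExponent ν (t * φ x))
          - Complex.exp (∫ x : En n, levyExponent ν (-t * φ x))) / (t:ℂ) ^ 2 := by
      push_cast
      rw [← hreal t]
    calc ((2 - Complex.exp (∫ x : En n, levyExponent ν (t * φ x))
          - Complex.exp (∫ x : En n, levyExponent ν (-t * φ x))) / (t:ℂ) ^ 2).re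
        = ((((((∫ ω : WNSpace n, 2 * (1 - Real.cos (t * X ω)) ∂P) / t ^ 2 : ℝ))) : ℂ)).re := by
          rw [hJt]
      _ = (∫ ω : WNSpace n, 2 * (1 - Real.cos (t * X ω)) ∂P) / t ^ 2 := Complex.ofReal_re _
  -- approximating sequence
  set u : ℕ → ℝ := fun k => 1 / ((k:ℝ) + 1) with hu_def
  have hu0 : ∀ k, u k ≠ 0 := fun k => by positivity
  have hu : Tendsto u atTop (nhdsWithin (0:ℝ) {0}ᶜ) := by
    apply tendsto_nhdsWithin_of_tendsto_nhds_of_eventually_within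
    · exact tendsto_one_div_add_atTop_nhds_zero_nat
    · filter_upwards with k
      exact hu0 k
  set G : ℕ → WNSpace n → ℝ := fun k ω => 2 * (1 - Real.cos (u k * X ω)) / (u k) ^ 2 with hG_def
  have hGm : ∀ k, Measurable (G k) := by
    intro k
    apply Measurable.div_const
    apply Measurable.const_mul
    exact measurable_const.sub (Real.continuous_cos.measurable.comp (hXm.const_mul (u k)))
  have hGnonneg : ∀ k ω, 0 ≤ G k ω := by
    intro k ω
    have h1 : Real.cos (u k * X ω) ≤ 1 := Real.cos_le_one _
    have h2 : (0:ℝ) < (u k) ^ 2 := by positivity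
    apply div_nonneg _ h2.le
    nlinarith
  have hGle : ∀ k ω, G k ω ≤ X ω ^ 2 := by
    intro k ω
    have h1 := aux_one_sub_cos (u k * X ω)
    have h2 : (0:ℝ) < (u k) ^ 2 := by positivity
    rw [hG_def]
    rw [div_le_iff₀ h2]
    calc 2 * (1 - Real.cos (u k * X ω)) ≤ (u k * X ω) ^ 2 := h1
      _ = X ω ^ 2 * (u k) ^ 2 := by ring
  have hGint : ∀ k, Integrable (G k) P := by
    intro k
    apply Integrable.mono' (integrable_const (4 / (u k) ^ 2)) ((hGm k).aestronglyMeasurable)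
    filter_upwards with ω
    rw [Real.norm_eq_abs, _root_.abs_of_nonneg (hGnonneg k ω)]
    have h1 : -1 ≤ Real.cos (u k * X ω) := Real.neg_one_le_cos _
    have h2 : (0:ℝ) < (u k) ^ 2 := by positivity
    show 2 * (1 - Real.cos (u k * X ω)) / (u k) ^ 2 ≤ 4 / (u k) ^ 2
    gcongr
    nlinarith
  have hGtend : ∀ ω, Tendsto (fun k => G k ω) atTop (nhds (X ω ^ 2)) := fun ω =>
    (aux_tendsto_cos (X ω)).comp hu
  have hJu : Tendsto (fun k => ∫ ω : WNSpace n, G k ω ∂P) atTop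
      (nhds ((∫ z : ℝ, z ^ 2 ∂ν) * (∫ x : En n, (φ x) ^ 2))) := by
    have h := hJ.comp hu
    apply h.congr
    intro k
    exact (integral_div _ _).symm
  have hK : ∫⁻ ω : WNSpace n, ENNReal.ofReal (X ω ^ 2) ∂P
      ≤ ENNReal.ofReal ((∫ z : ℝ, z ^ 2 ∂ν) * (∫ x : En n, (φ x) ^ 2)) := by
    have h1 : ∀ ω : WNSpace n, ENNReal.ofReal (X ω ^ 2)
        = Filter.liminf (fun k => ENNReal.ofReal (G k ω)) atTop := fun ω =>
      (((ENNReal.continuous_ofReal.tendsto _).comp (hGtend ω)).liminf_eq).symm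
    calc ∫⁻ ω : WNSpace n, ENNReal.ofReal (X ω ^ 2) ∂P
        = ∫⁻ ω : WNSpace n, Filter.liminf (fun k => ENNReal.ofReal (G k ω)) atTop ∂P :=
          lintegral_congr h1
      _ ≤ Filter.liminf (fun k => ∫⁻ ω : WNSpace n, ENNReal.ofReal (G k ω) ∂P) atTop :=
          lintegral_liminf_le (fun k => ENNReal.measurable_ofReal.comp (hGm k))
      _ = Filter.liminf (fun k => ENNReal.ofReal (∫ ω : WNSpace n, G k ω ∂P)) atTop := by
          congr 1
          funext k
          rw [← ofReal_integral_eq_lintegral_ofReal (hGint k) (ae_of_all _ (hGnonneg k))]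
      _ = ENNReal.ofReal ((∫ z : ℝ, z ^ 2 ∂ν) * (∫ x : En n, (φ x) ^ 2)) :=
          ((ENNReal.continuous_ofReal.tendsto _).comp hJu).liminf_eq
  have hXsq_int : Integrable (fun ω : WNSpace n => X ω ^ 2) P := by
    refine ⟨(hXm.pow_const 2).aestronglyMeasurable, ?_⟩
    rw [hasFiniteIntegral_iff_ofReal (ae_of_all _ (fun ω => sq_nonneg (X ω)))]
    exact lt_of_le_of_lt hK ENNReal.ofReal_lt_top
  have hDCT : Tendsto (fun k => ∫ ω : WNSpace n, G k ω ∂P) atTop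
      (nhds (∫ ω : WNSpace n, X ω ^ 2 ∂P)) := by
    apply tendsto_integral_of_dominated_convergence (fun ω => X ω ^ 2)
      (fun k => (hGm k).aestronglyMeasurable) hXsq_int
    · intro k
      filter_upwards with ω
      rw [Real.norm_eq_abs, _root_.abs_of_nonneg (hGnonneg k ω)]
      exact hGle k ω
    · filter_upwards with ω
      exact hGtend ω
  exact tendsto_nhds_unique hDCT hJu


end Aux

theorem second_moment_of_difference
    (n : ℕ) (hn : 1 ≤ n)
    (ν : Measure ℝ) (hν0 : ν {0} = 0)
    (hM : Integrable (fun z : ℝ => z ^ 2) ν)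
    (M : ℝ) (hMdef : M = ∫ z : ℝ, z ^ 2 ∂ν)
    (P : Measure (WNSpace n)) [IsProbabilityMeasure P]
    (hBM : ∀ φ : SchwartzMap (En n) ℝ,
      ∫ ω : WNSpace n, Complex.exp (Complex.I * (ω φ : ℝ)) ∂P
        = Complex.exp (∫ x : En n, levyExponent ν (φ x))) :
    ∀ φ₁ φ₂ : SchwartzMap (En n) ℝ,
      (∫ ω : WNSpace n, (ω φ₁ - ω φ₂) ^ 2 ∂P
          = M * ∫ x : En n, (φ₁ x - φ₂ x) ^ 2) ∧
      (M * ∫ x : En n, (φ₁ x - φ₂ x) ^ 2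
          = M * (eLpNorm (fun x : En n => φ₁ x - φ₂ x) 2 volume).toReal ^ 2) := by
  intro φ₁ φ₂
  have hkey := aux_key ν hM P hBM (φ₁ - φ₂)
  have e2 : ∀ x : En n, (φ₁ - φ₂) x = φ₁ x - φ₂ x := fun x => SchwartzMap.sub_apply φ₁ φ₂ x
  have hsq : (∫ x : En n, ((φ₁ - φ₂) x) ^ 2) = ∫ x : En n, (φ₁ x - φ₂ x) ^ 2 := by
    simp_rw [e2]
  constructor
  · have e1 : ∀ ω : WNSpace n, (ω φ₁ - ω φ₂ : ℝ) = ω (φ₁ - φ₂) := fun ω => by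
      rw [_root_.map_sub]
    calc ∫ ω : WNSpace n, (ω φ₁ - ω φ₂) ^ 2 ∂P
        = ∫ ω : WNSpace n, (ω (φ₁ - φ₂) : ℝ) ^ 2 ∂P := by simp_rw [e1]
      _ = (∫ z : ℝ, z ^ 2 ∂ν) * ∫ x : En n, ((φ₁ - φ₂) x) ^ 2 := hkey
      _ = M * ∫ x : En n, (φ₁ x - φ₂ x) ^ 2 := by rw [hMdef, hsq]
  · set f : En n → ℝ := fun x => φ₁ x - φ₂ x with hf
    have hfm : AEStronglyMeasurable f volume :=
      (φ₁.continuous.sub φ₂.continuous).aestronglyMeasurable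
    have hfsq : Integrable (fun x : En n => f x ^ 2) := by
      have h := aux_schwartz_sq_integrable (φ₁ - φ₂)
      apply h.congr
      filter_upwards with x
      rw [e2]
    have hmem : MemLp f 2 volume := (memLp_two_iff_integrable_sq hfm).2 hfsq
    have hint : (∫ x : En n, ‖f x‖ ^ (2:ℝ)) = ∫ x : En n, (φ₁ x - φ₂ x) ^ 2 := by
      apply integral_congr_ae
      filter_upwards with x
      rw [show (2:ℝ) = ((2:ℕ):ℝ) by norm_num, Real.rpow_natCast, Real.norm_eq_abs,
        _root_.sq_abs]
    have hnn : (0:ℝ) ≤ ∫ x : En n, (φ₁ x - φ₂ x) ^ 2 :=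
      integral_nonneg fun x => sq_nonneg _
    rw [hmem.eLpNorm_eq_integral_rpow_norm (by norm_num) (by norm_num)]
    have h2 : ((2:ENNReal)).toReal = (2:ℝ) := by norm_num
    rw [h2, hint]
    rw [ENNReal.toReal_ofReal (by positivity)]
    rw [← Real.rpow_natCast ((∫ x : En n, (φ₁ x - φ₂ x) ^ 2) ^ (2:ℝ)⁻¹) 2,
        ← Real.rpow_mul hnn]
    norm_num
end
end

section
/- Let {η_m}_{m ≥ 0} ⊂ L²(ρ) be an orthogonal family of nonzero elements whose linear span is dense in L²(ρ) (e.g. the orthogonalization of {1, z, z², …}). Define p_j(z) := ‖η_{j−1}‖_{L²(ρ)}^{−1} · z · η_{j−1}(z) for j = 1, 2, …. Then {p_j}_{j ≥ 1} is an orthonormal basis of L²(ν): it is orthonormal in L²(ν) and its linear span is dense in L²(ν). -/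
open MeasureTheory
open scoped ENNReal NNReal

namespace PFamAux

lemma density_meas : Measurable (fun z : ℝ => ENNReal.ofReal (z ^ 2)) :=
  (measurable_id.pow_const 2).ennreal_ofReal

lemma lintegral_rho (ν : Measure ℝ) (G : ℝ → ℝ≥0∞) :
    ∫⁻ z, G z ∂(ν.withDensity fun z => ENNReal.ofReal (z ^ 2))
      = ∫⁻ z, ENNReal.ofReal (z ^ 2) * G z ∂ν := by
  rw [lintegral_withDensity_eq_lintegral_mul_non_measurable ν density_meas
    (ae_of_all _ fun z => ENNReal.ofReal_lt_top)]
  rfl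

lemma integral_rho (ν : Measure ℝ) (g : ℝ → ℝ) :
    ∫ z, g z ∂(ν.withDensity fun z => ENNReal.ofReal (z ^ 2)) = ∫ z, z ^ 2 * g z ∂ν := by
  have h1 : (fun z : ℝ => ENNReal.ofReal (z ^ 2))
      = fun z : ℝ => ((Real.toNNReal (z ^ 2) : ℝ≥0) : ℝ≥0∞) := rfl
  rw [h1, integral_withDensity_eq_integral_smul (f := fun z : ℝ => (z ^ 2).toNNReal) (by measurability) g]
  congr 1
  funext z
  simp [NNReal.smul_def, Real.coe_toNNReal _ (sq_nonneg z)]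

lemma nu_ac (ν : Measure ℝ) (hν0 : ν {0} = 0) :
    ν ≪ ν.withDensity fun z => ENNReal.ofReal (z ^ 2) := by
  refine Measure.AbsolutelyContinuous.mk fun s hs h0 => ?_
  rw [withDensity_apply_eq_zero density_meas] at h0
  have hsub : s ⊆ {(0:ℝ)} ∪ ({z : ℝ | ENNReal.ofReal (z ^ 2) ≠ 0} ∩ s) := by
    intro z hz
    by_cases hz0 : z = 0
    · exact Or.inl (by simp [hz0])
    · refine Or.inr ⟨?_, hz⟩
      simp only [Set.mem_setOf_eq, ne_eq, ENNReal.ofReal_eq_zero, not_le]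
      positivity
  refine nonpos_iff_eq_zero.mp ?_
  calc ν s ≤ ν ({(0:ℝ)} ∪ ({z : ℝ | ENNReal.ofReal (z ^ 2) ≠ 0} ∩ s)) := measure_mono hsub
    _ ≤ ν {(0:ℝ)} + ν ({z : ℝ | ENNReal.ofReal (z ^ 2) ≠ 0} ∩ s) := measure_union_le _ _
    _ = 0 := by rw [hν0, h0, add_zero]

lemma eLpNorm_mul (ν : Measure ℝ) (u : ℝ → ℝ) :
    eLpNorm (fun z => z * u z) 2 ν
      = eLpNorm u 2 (ν.withDensity fun z => ENNReal.ofReal (z ^ 2)) := by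
  rw [eLpNorm_eq_lintegral_rpow_enorm_toReal two_ne_zero ENNReal.ofNat_ne_top,
      eLpNorm_eq_lintegral_rpow_enorm_toReal two_ne_zero ENNReal.ofNat_ne_top,
      lintegral_rho]
  congr 1
  refine lintegral_congr fun z => ?_
  have h2 : ((2:ℝ≥0∞).toReal) = ((2:ℕ):ℝ) := by norm_num
  rw [h2]
  simp only [ENNReal.rpow_natCast]
  rw [enorm_mul]
  rw [mul_pow, Real.enorm_eq_ofReal_abs, ← ENNReal.ofReal_pow (abs_nonneg z), sq_abs]

lemma memLp_mul (ν : Measure ℝ) (hν0 : ν {0} = 0) {g : ℝ → ℝ}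
    (hg : MemLp g 2 (ν.withDensity fun z => ENNReal.ofReal (z ^ 2))) :
    MemLp (fun z => z * g z) 2 ν := by
  refine ⟨measurable_id.aestronglyMeasurable.mul (hg.1.mono_ac (nu_ac ν hν0)), ?_⟩
  rw [eLpNorm_mul]
  exact hg.2

end PFamAux

open PFamAux

theorem p_family_orthonormal_basis_of_L2nu
    (ν : Measure ℝ) (hν0 : ν {0} = 0)
    (hM : Integrable (fun z : ℝ => z ^ 2) ν)
    -- ρ(dz) = z² ν(dz):
    (ρ : Measure ℝ) (hρ : ρ = ν.withDensity fun z => ENNReal.ofReal (z ^ 2))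
    -- {η_m}_{m ≥ 0} ⊂ L²(ρ) : an orthogonal family of nonzero elements with dense span
    -- (here η m corresponds to η_m, m = 0, 1, 2, …):
    (η : ℕ → ℝ → ℝ)
    (hηmem : ∀ m, MemLp (η m) 2 ρ)
    (hηne : ∀ m, ¬ (η m =ᵐ[ρ] (fun _ => (0 : ℝ))))
    (hηorth : ∀ m m', m ≠ m' → ∫ z : ℝ, η m z * η m' z ∂ρ = 0)
    (hηdense : Dense {F : Lp ℝ 2 ρ |
      ∃ g ∈ Submodule.span ℝ (Set.range η), ⇑F =ᵐ[ρ] g})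
    -- p_j(z) = ‖η_{j-1}‖_{L²(ρ)}⁻¹ · z · η_{j-1}(z) for j = 1, 2, …
    -- (here p j corresponds to p_{j+1}, j = 0, 1, 2, …):
    (p : ℕ → ℝ → ℝ)
    (hp : ∀ j z, p j z = (Real.sqrt (∫ t : ℝ, (η j t) ^ 2 ∂ρ))⁻¹ * (z * η j z)) :
    -- {p_j}_{j ≥ 1} is an orthonormal basis of L²(ν): it belongs to L²(ν),
    -- is orthonormal there, and its linear span is dense in L²(ν):
    (∀ j, MemLp (p j) 2 ν) ∧
    (∀ j j', ∫ z : ℝ, p j z * p j' z ∂ν = if j = j' then 1 else 0) ∧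
    Dense {F : Lp ℝ 2 ν | ∃ g ∈ Submodule.span ℝ (Set.range p), ⇑F =ᵐ[ν] g} := by
  subst hρ
  set ρ := ν.withDensity fun z => ENNReal.ofReal (z ^ 2) with hρdef
  -- positivity of the squared norms
  have hSpos : ∀ j, 0 < ∫ t : ℝ, (η j t) ^ 2 ∂ρ := by
    intro j
    rcases lt_or_eq_of_le (integral_nonneg (f := fun t => (η j t) ^ 2) fun t => sq_nonneg (η j t)) with h | h
    · exact h
    · exfalso
      apply hηne j
      have h0 := (integral_eq_zero_iff_of_nonneg (fun t => sq_nonneg (η j t))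
        (hηmem j).integrable_sq).mp h.symm
      filter_upwards [h0] with t ht
      exact pow_eq_zero_iff two_ne_zero |>.mp ht
  have hsne : ∀ j, Real.sqrt (∫ t : ℝ, (η j t) ^ 2 ∂ρ) ≠ 0 :=
    fun j => ne_of_gt (Real.sqrt_pos.mpr (hSpos j))
  -- MemLp
  have hpmem : ∀ j, MemLp (p j) 2 ν := by
    intro j
    have hpj : p j = fun z => (Real.sqrt (∫ t : ℝ, (η j t) ^ 2 ∂ρ))⁻¹ * (z * η j z) :=
      funext (hp j)
    rw [hpj]
    exact (memLp_mul ν hν0 (hηmem j)).const_mul _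
  refine ⟨hpmem, ?_, ?_⟩
  -- orthonormality
  · intro j j'
    have hc : ∀ z, p j z * p j' z
        = ((Real.sqrt (∫ t : ℝ, (η j t) ^ 2 ∂ρ))⁻¹ * (Real.sqrt (∫ t : ℝ, (η j' t) ^ 2 ∂ρ))⁻¹)
            * (z ^ 2 * (η j z * η j' z)) := by
      intro z; rw [hp, hp]; ring
    simp only [hc]
    rw [integral_const_mul, ← integral_rho ν (fun z => η j z * η j' z)]
    by_cases hjj : j = j'
    · subst hjj
      rw [if_pos rfl]
      have hint : ∫ z, η j z * η j z ∂ρ = ∫ t : ℝ, (η j t) ^ 2 ∂ρ := by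
        simp only [← pow_two]
      rw [hint]
      have hS := hSpos j
      rw [← Real.sqrt_mul_self (le_of_lt hS)]
      field_simp
      simp [Real.sqrt_sq hS.le, Real.sq_sqrt (Real.sqrt_nonneg _), Real.sqrt_nonneg, Real.sq_sqrt hS.le]
    · rw [hηorth j j' hjj, mul_zero, if_neg hjj]
  -- density
  · rw [Metric.dense_iff]
    intro F ε hε
    have hF := Lp.memLp F
    have hne : ∀ᵐ z ∂ν, z ≠ 0 := by
      rw [ae_iff]
      simpa using hν0
    set g : ℝ → ℝ := fun z => z⁻¹ * F z with hg
    have hgAESM : AEStronglyMeasurable g ρ :=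
      (measurable_inv.aestronglyMeasurable.mul
        (hF.1.mono_ac (withDensity_absolutelyContinuous ν _)))
    have hzg : ∀ᵐ z ∂ν, z * g z = F z := by
      filter_upwards [hne] with z hz
      simp only [hg]
      rw [← mul_assoc, mul_inv_cancel₀ hz, one_mul]
    have hgmem : MemLp g 2 ρ := by
      refine ⟨hgAESM, ?_⟩
      rw [← eLpNorm_mul, eLpNorm_congr_ae (hzg : (fun z => z * g z) =ᵐ[ν] F)]
      exact hF.2
    obtain ⟨H, hHball, h, hhspan, hHh⟩ :=
      Metric.dense_iff.mp hηdense (hgmem.toLp g) ε hε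
    have hhmem : MemLp h 2 ρ := (Lp.memLp H).ae_eq hHh
    have hzh : MemLp (fun z => z * h z) 2 ν := memLp_mul ν hν0 hhmem
    have hspanp : (fun z : ℝ => z * h z) ∈ Submodule.span ℝ (Set.range p) := by
      let M : (ℝ → ℝ) →ₗ[ℝ] (ℝ → ℝ) :=
        { toFun := fun u => fun z => z * u z
          map_add' := fun u v => by funext z; simp [mul_add]
          map_smul' := fun c u => by
            funext z
            simp only [Pi.smul_apply, smul_eq_mul, RingHom.id_apply]
            ring }
      have h1 : (fun z : ℝ => z * h z) = M h := rfl
      rw [h1]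
      have h2 : M h ∈ Submodule.map M (Submodule.span ℝ (Set.range η)) :=
        Submodule.mem_map_of_mem hhspan
      rw [Submodule.map_span] at h2
      refine Submodule.span_le.mpr ?_ h2
      rintro _ ⟨_, ⟨j, rfl⟩, rfl⟩
      have h3 : M (η j) = Real.sqrt (∫ t : ℝ, (η j t) ^ 2 ∂ρ) • p j := by
        funext z
        simp only [Pi.smul_apply, smul_eq_mul, hp j z, M, LinearMap.coe_mk, AddHom.coe_mk]
        rw [← mul_assoc, mul_inv_cancel₀ (hsne j), one_mul]
      rw [h3]
      exact Submodule.smul_mem _ _ (Submodule.subset_span ⟨j, rfl⟩)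
    refine ⟨hzh.toLp _, ?_, ⟨fun z => z * h z, hspanp, hzh.coeFn_toLp⟩⟩
    have e1 : (⇑(hzh.toLp _) - ⇑F) =ᵐ[ν] fun z => z * (h z - g z) := by
      filter_upwards [hzh.coeFn_toLp, hzg] with z h1 h2
      simp only [Pi.sub_apply, h1, ← h2]
      ring
    have e2 : (⇑H - ⇑(hgmem.toLp g)) =ᵐ[ρ] fun z => h z - g z := by
      filter_upwards [hHh, hgmem.coeFn_toLp] with z h1 h2
      simp [Pi.sub_apply, h1, h2]
    have hd : dist (hzh.toLp _) F = dist H (hgmem.toLp g) := by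
      rw [Lp.dist_def, Lp.dist_def, eLpNorm_congr_ae e1, eLpNorm_congr_ae e2, eLpNorm_mul]
    rw [Metric.mem_ball, hd]
    exact Metric.mem_ball.mp hHball
end
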